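/- For α > -1, n ≥ 1, and x ∈ [0,1), B_n^{α,-1}(e_2; x) = (nx+α+1)(nx+α+2)/((n+α+1)(n+α+2)) > x². Consequently lim_{m→∞}(B_n^{α,-1})^m f(x) = f(1) uniformly on [0,1] for each f ∈ C[0,1]. -/

import Mathlib

open MeasureTheory intervalIntegral Filter

/-- The Beta operator with Jacobi weights: `B_n^{α,β}(f;x)`. -/
noncomputable def Bop (n α β : ℝ) (f : ℝ → ℝ) (x : ℝ) : ℝ :=
  (∫ t in (0:ℝ)..1, t ^ (n * x + α) * (1 - t) ^ (n - n * x + β) * f t) /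
  (∫ t in (0:ℝ)..1, t ^ (n * x + α) * (1 - t) ^ (n - n * x + β))

/-- The `m`-th central moment `T_{n,m}^{α,β}(x)`. -/
noncomputable def T (n α β : ℝ) (m : ℕ) (x : ℝ) : ℝ :=
  Bop n α β (fun t => (t - x) ^ m) x


/-- The Beta operator extended to the limiting cases `α = -1` (interpolation at `0`)
and `β = -1` (interpolation at `1`). -/
noncomputable def BopE (n α β : ℝ) (f : ℝ → ℝ) (x : ℝ) : ℝ :=
  if α = -1 ∧ x = 0 then f 0
  else if β = -1 ∧ x = 1 then f 1
  else Bop n α β f x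

/-- The `m`-th central moment of the extended Beta operator. -/
noncomputable def TE (n α β : ℝ) (m : ℕ) (x : ℝ) : ℝ :=
  BopE n α β (fun t => (t - x) ^ m) x

section auxlemmas
variable {α ν x : ℝ}

lemma myAe_ne_one : ∀ᵐ t : ℝ, t ≠ (1:ℝ) := by
  rw [MeasureTheory.ae_iff]; simp

lemma myBeta_integrand_eq {p q : ℝ} (t : ℝ) (ht0 : 0 ≤ t) (ht1 : t ≤ 1) :
    (t:ℂ) ^ ((p:ℂ) + 1 - 1) * ((1:ℂ) - (t:ℂ)) ^ ((q:ℂ) + 1 - 1)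
      = ((t ^ p * (1 - t) ^ q : ℝ) : ℂ) := by
  have h1 : (0:ℝ) ≤ 1 - t := by linarith
  have e1 : ((1:ℂ) - (t:ℂ)) = ((1 - t : ℝ) : ℂ) := by push_cast; ring
  rw [add_sub_cancel_right, add_sub_cancel_right, e1,
    ← Complex.ofReal_cpow ht0, ← Complex.ofReal_cpow h1, ← Complex.ofReal_mul]

lemma myBeta_integrableOn {p q : ℝ} (hp : -1 < p) (hq : -1 < q) :
    IntegrableOn (fun t : ℝ => t ^ p * (1 - t) ^ q) (Set.Ioc 0 1) := by
  have hp' : 0 < ((p:ℂ) + 1).re := by simp; linarith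
  have hq' : 0 < ((q:ℂ) + 1).re := by simp; linarith
  have h := Complex.betaIntegral_convergent hp' hq'
  rw [intervalIntegrable_iff_integrableOn_Ioc_of_le zero_le_one] at h
  have h2 := h.re
  have h3 : IntegrableOn (fun x : ℝ => RCLike.re ((x:ℂ) ^ ((p:ℂ) + 1 - 1) * (1 - (x:ℂ)) ^ ((q:ℂ) + 1 - 1))) (Set.Ioc 0 1) := h2
  refine IntegrableOn.congr_fun h3 (fun t ht => ?_) measurableSet_Ioc
  have := myBeta_integrand_eq (p := p) (q := q) t ht.1.le ht.2
  simp only [this, Complex.ofReal_re, RCLike.re_to_complex]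

lemma myBeta_eval {p q : ℝ} (hp : -1 < p) (hq : -1 < q) :
    ∫ t in (0:ℝ)..1, t ^ p * (1 - t) ^ q
      = Real.Gamma (p + 1) * Real.Gamma (q + 1) / Real.Gamma (p + q + 2) := by
  have hp' : 0 < ((p:ℂ) + 1).re := by simp; linarith
  have hq' : 0 < ((q:ℂ) + 1).re := by simp; linarith
  have hbeta : Complex.betaIntegral ((p:ℂ)+1) ((q:ℂ)+1)
      = ((∫ t in (0:ℝ)..1, t ^ p * (1 - t) ^ q : ℝ) : ℂ) := by
    rw [Complex.betaIntegral, ← intervalIntegral.integral_ofReal]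
    refine intervalIntegral.integral_congr fun t ht => ?_
    rw [Set.uIcc_of_le (zero_le_one' ℝ)] at ht
    exact myBeta_integrand_eq t ht.1 ht.2
  have h := Complex.Gamma_mul_Gamma_eq_betaIntegral hp' hq'
  rw [hbeta] at h
  have e3 : ((p:ℂ)+1) + ((q:ℂ)+1) = ((p+q+2:ℝ):ℂ) := by push_cast; ring
  have e1 : ((p:ℂ)+1) = ((p+1:ℝ):ℂ) := by push_cast; ring
  have e2 : ((q:ℂ)+1) = ((q+1:ℝ):ℂ) := by push_cast; ring
  rw [e3, e1, e2, Complex.Gamma_ofReal, Complex.Gamma_ofReal, Complex.Gamma_ofReal] at h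
  have h' : Real.Gamma (p+1) * Real.Gamma (q+1)
      = Real.Gamma (p+q+2) * ∫ t in (0:ℝ)..1, t ^ p * (1 - t) ^ q := by exact_mod_cast h
  have hΓ : 0 < Real.Gamma (p+q+2) := Real.Gamma_pos_of_pos (by linarith)
  rw [h', mul_comm (Real.Gamma (p+q+2)), mul_div_assoc, div_self hΓ.ne', mul_one]

lemma weight_monomial_ae (p q : ℝ) (j k : ℕ) :
    ∀ᵐ t : ℝ, t ∈ Set.Ioc (0:ℝ) 1 →
      t ^ p * (1 - t) ^ q * (t ^ j * (1 - t) ^ k) = t ^ (p + j) * (1 - t) ^ (q + k) := by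
  filter_upwards [myAe_ne_one] with t ht1 htI
  have ht0 : 0 < t := htI.1
  have htl : 0 < 1 - t := by
    have := lt_of_le_of_ne htI.2 ht1
    linarith
  rw [Real.rpow_add ht0, Real.rpow_add htl, Real.rpow_natCast, Real.rpow_natCast]
  ring

lemma weight_monomial_integrableOn {p q : ℝ} (hp : -1 < p) (hq : -1 < q) (j k : ℕ) :
    IntegrableOn (fun t : ℝ => t ^ p * (1 - t) ^ q * (t ^ j * (1 - t) ^ k)) (Set.Ioc 0 1) := by
  have hpj : -1 < p + j := by
    have : (0:ℝ) ≤ j := Nat.cast_nonneg j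
    linarith
  have hqk : -1 < q + k := by
    have : (0:ℝ) ≤ k := Nat.cast_nonneg k
    linarith
  have h := myBeta_integrableOn hpj hqk
  refine h.congr ?_
  rw [Filter.EventuallyEq, MeasureTheory.ae_restrict_iff' measurableSet_Ioc]
  filter_upwards [weight_monomial_ae p q j k] with t ht htI
  exact (ht htI).symm

lemma integral_weight_monomial {p q : ℝ} (hp : -1 < p) (hq : -1 < q) (j k : ℕ) :
    ∫ t in (0:ℝ)..1, t ^ p * (1 - t) ^ q * (t ^ j * (1 - t) ^ k)
      = Real.Gamma (p + j + 1) * Real.Gamma (q + k + 1) / Real.Gamma (p + j + (q + k) + 2) := by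
  have hpj : -1 < p + j := by
    have : (0:ℝ) ≤ j := Nat.cast_nonneg j
    linarith
  have hqk : -1 < q + k := by
    have : (0:ℝ) ≤ k := Nat.cast_nonneg k
    linarith
  have hcongr : ∫ t in (0:ℝ)..1, t ^ p * (1 - t) ^ q * (t ^ j * (1 - t) ^ k)
      = ∫ t in (0:ℝ)..1, t ^ (p + j) * (1 - t) ^ (q + k) := by
    apply intervalIntegral.integral_congr_ae
    filter_upwards [weight_monomial_ae p q j k] with t ht htI
    exact ht (by rwa [Set.uIoc_of_le (zero_le_one' ℝ)] at htI)
  rw [hcongr, myBeta_eval hpj hqk]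

lemma myGamma_shift2 {y : ℝ} (hy : 0 < y) :
    Real.Gamma (y + 2) = (y + 1) * y * Real.Gamma y := by
  have h1 : Real.Gamma (y + 1) = y * Real.Gamma y := Real.Gamma_add_one hy.ne'
  have h2 : Real.Gamma (y + 1 + 1) = (y + 1) * Real.Gamma (y + 1) :=
    Real.Gamma_add_one (by linarith)
  have e : y + 2 = y + 1 + 1 := by ring
  rw [e, h2, h1]; ring




lemma hp_aux (hα : -1 < α) (hν : 1 ≤ ν) (hx : x ∈ Set.Ico (0:ℝ) 1) :
    -1 < ν * x + α := by
  have : 0 ≤ ν * x := mul_nonneg (by linarith) hx.1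
  linarith

lemma hq_aux (hν : 1 ≤ ν) (hx : x ∈ Set.Ico (0:ℝ) 1) :
    -1 < ν - ν * x + (-1) := by
  have : 0 < ν * (1 - x) := mul_pos (by linarith) (by linarith [hx.2])
  nlinarith

lemma D_eval (hα : -1 < α) (hν : 1 ≤ ν) (hx : x ∈ Set.Ico (0:ℝ) 1) :
    ∫ t in (0:ℝ)..1, t ^ (ν * x + α) * (1 - t) ^ (ν - ν * x + (-1))
      = Real.Gamma (ν * x + α + 1) * Real.Gamma (ν - ν * x) / Real.Gamma (ν + α + 1) := by
  rw [myBeta_eval (hp_aux hα hν hx) (hq_aux hν hx)]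
  congr 2 <;> ring

lemma D_pos (hα : -1 < α) (hν : 1 ≤ ν) (hx : x ∈ Set.Ico (0:ℝ) 1) :
    0 < ∫ t in (0:ℝ)..1, t ^ (ν * x + α) * (1 - t) ^ (ν - ν * x + (-1)) := by
  rw [D_eval hα hν hx]
  have h1 : 0 < ν * x + α + 1 := by
    have : 0 ≤ ν * x := mul_nonneg (by linarith) hx.1
    linarith
  have h2 : 0 < ν - ν * x := by nlinarith [mul_pos (show (0:ℝ) < ν by linarith) (show (0:ℝ) < 1 - x by linarith [hx.2])]
  have h3 : 0 < ν + α + 1 := by linarith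
  exact div_pos (mul_pos (Real.Gamma_pos_of_pos h1) (Real.Gamma_pos_of_pos h2))
    (Real.Gamma_pos_of_pos h3)

lemma L_e2 (hα : -1 < α) (hν : 1 ≤ ν) (hx : x ∈ Set.Ico (0:ℝ) 1) :
    ∫ t in (0:ℝ)..1, t ^ (ν * x + α) * (1 - t) ^ (ν - ν * x + (-1)) * t ^ 2
      = (∫ t in (0:ℝ)..1, t ^ (ν * x + α) * (1 - t) ^ (ν - ν * x + (-1)))
        * ((ν * x + α + 1) * (ν * x + α + 2) / ((ν + α + 1) * (ν + α + 2))) := by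
  have hp := hp_aux hα hν hx
  have hq := hq_aux hν hx
  have h1 : 0 < ν * x + α + 1 := by linarith
  have h2 : 0 < ν - ν * x := by linarith [hq]
  have h3 : 0 < ν + α + 1 := by linarith
  have h := integral_weight_monomial hp hq 2 0
  simp only [pow_zero, mul_one, Nat.cast_ofNat, Nat.cast_zero, add_zero] at h
  rw [h, D_eval hα hν hx]
  have e1 : ν * x + α + 2 + 1 = (ν * x + α + 1) + 2 := by ring
  have e2 : ν * x + α + 2 + (ν - ν * x + (-1)) + 2 = (ν + α + 1) + 2 := by ring
  have e3 : ν - ν * x + (-1) + 1 = ν - ν * x := by ring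
  rw [e1, e2, e3, myGamma_shift2 h1, myGamma_shift2 h3]
  have g1 : 0 < Real.Gamma (ν * x + α + 1) := Real.Gamma_pos_of_pos h1
  have g2 : 0 < Real.Gamma (ν - ν * x) := Real.Gamma_pos_of_pos h2
  have g3 : 0 < Real.Gamma (ν + α + 1) := Real.Gamma_pos_of_pos h3
  have h4 : 0 < ν + α + 2 := by linarith
  generalize hG1 : Real.Gamma (ν * x + α + 1) = G1 at g1 ⊢
  generalize hG2 : Real.Gamma (ν - ν * x) = G2 at g2 ⊢
  generalize hG3 : Real.Gamma (ν + α + 1) = G3 at g3 ⊢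
  field_simp
  ring

lemma L_m1 (hα : -1 < α) (hν : 1 ≤ ν) (hx : x ∈ Set.Ico (0:ℝ) 1) :
    ∫ t in (0:ℝ)..1, t ^ (ν * x + α) * (1 - t) ^ (ν - ν * x + (-1)) * (1 - t)
      = (∫ t in (0:ℝ)..1, t ^ (ν * x + α) * (1 - t) ^ (ν - ν * x + (-1)))
        * ((ν - ν * x) / (ν + α + 1)) := by
  have hp := hp_aux hα hν hx
  have hq := hq_aux hν hx
  have h1 : 0 < ν * x + α + 1 := by linarith
  have h2 : 0 < ν - ν * x := by linarith [hq]
  have h3 : 0 < ν + α + 1 := by linarith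
  have h := integral_weight_monomial hp hq 0 1
  simp only [pow_zero, pow_one, one_mul, Nat.cast_zero, Nat.cast_one, add_zero] at h
  rw [h, D_eval hα hν hx]
  have e2 : ν * x + α + (ν - ν * x + (-1) + 1) + 2 = (ν + α + 1) + 1 := by ring
  have e3 : ν - ν * x + (-1) + 1 + 1 = (ν - ν * x) + 1 := by ring
  rw [e2, e3, Real.Gamma_add_one h2.ne', Real.Gamma_add_one h3.ne']
  have g1 : 0 < Real.Gamma (ν * x + α + 1) := Real.Gamma_pos_of_pos h1
  have g2 : 0 < Real.Gamma (ν - ν * x) := Real.Gamma_pos_of_pos h2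
  have g3 : 0 < Real.Gamma (ν + α + 1) := Real.Gamma_pos_of_pos h3
  have h4 : 0 < ν + α + 2 := by linarith
  generalize hG1 : Real.Gamma (ν * x + α + 1) = G1 at g1 ⊢
  generalize hG2 : Real.Gamma (ν - ν * x) = G2 at g2 ⊢
  generalize hG3 : Real.Gamma (ν + α + 1) = G3 at g3 ⊢
  field_simp

lemma L_m2 (hα : -1 < α) (hν : 1 ≤ ν) (hx : x ∈ Set.Ico (0:ℝ) 1) :
    ∫ t in (0:ℝ)..1, t ^ (ν * x + α) * (1 - t) ^ (ν - ν * x + (-1)) * (1 - t) ^ 2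
      = (∫ t in (0:ℝ)..1, t ^ (ν * x + α) * (1 - t) ^ (ν - ν * x + (-1)))
        * ((ν - ν * x) * (ν - ν * x + 1) / ((ν + α + 1) * (ν + α + 2))) := by
  have hp := hp_aux hα hν hx
  have hq := hq_aux hν hx
  have h1 : 0 < ν * x + α + 1 := by linarith
  have h2 : 0 < ν - ν * x := by linarith [hq]
  have h3 : 0 < ν + α + 1 := by linarith
  have h := integral_weight_monomial hp hq 0 2
  simp only [pow_zero, one_mul, Nat.cast_ofNat, Nat.cast_zero, add_zero] at h
  rw [h, D_eval hα hν hx]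
  have e2 : ν * x + α + (ν - ν * x + (-1) + 2) + 2 = (ν + α + 1) + 2 := by ring
  have e3 : ν - ν * x + (-1) + 2 + 1 = (ν - ν * x) + 2 := by ring
  rw [e2, e3, myGamma_shift2 h2, myGamma_shift2 h3]
  have g1 : 0 < Real.Gamma (ν * x + α + 1) := Real.Gamma_pos_of_pos h1
  have g2 : 0 < Real.Gamma (ν - ν * x) := Real.Gamma_pos_of_pos h2
  have g3 : 0 < Real.Gamma (ν + α + 1) := Real.Gamma_pos_of_pos h3
  have h4 : 0 < ν + α + 2 := by linarith
  generalize hG1 : Real.Gamma (ν * x + α + 1) = G1 at g1 ⊢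
  generalize hG2 : Real.Gamma (ν - ν * x) = G2 at g2 ⊢
  generalize hG3 : Real.Gamma (ν + α + 1) = G3 at g3 ⊢
  field_simp
  ring



lemma Bop_e2_val (hα : -1 < α) (hν : 1 ≤ ν) (hx : x ∈ Set.Ico (0:ℝ) 1) :
    Bop ν α (-1) (fun t => t ^ 2) x
      = (ν * x + α + 1) * (ν * x + α + 2) / ((ν + α + 1) * (ν + α + 2)) := by
  have hD := D_pos hα hν hx
  simp only [Bop]
  rw [L_e2 hα hν hx, mul_comm, mul_div_assoc, div_self hD.ne', mul_one]

lemma BopE_eq_Bop (hα : -1 < α) (hx1 : x ≠ 1) (h : ℝ → ℝ) :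
    BopE ν α (-1) h x = Bop ν α (-1) h x := by
  have : α ≠ -1 := by intro h'; rw [h'] at hα; exact lt_irrefl _ hα
  simp [BopE, this, hx1]

lemma measurable_Bop (ν' α' β' : ℝ) {h : ℝ → ℝ} (hm : Measurable h) :
    Measurable fun y => Bop ν' α' β' h y := by
  have key : ∀ g : ℝ → ℝ, Measurable g →
      Measurable fun y => ∫ t in Set.Ioc (0:ℝ) 1,
        t ^ (ν' * y + α') * (1 - t) ^ (ν' - ν' * y + β') * g t := by
    intro g hg
    have hsm : StronglyMeasurable (Function.uncurry fun (y t : ℝ) =>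
        t ^ (ν' * y + α') * (1 - t) ^ (ν' - ν' * y + β') * g t) := by
      apply Measurable.stronglyMeasurable
      apply Measurable.mul
      · apply Measurable.mul
        · exact Measurable.pow measurable_snd ((measurable_const.mul measurable_fst).add measurable_const)
        · exact Measurable.pow (measurable_const.sub measurable_snd)
            (((measurable_const.sub (measurable_const.mul measurable_fst))).add measurable_const)
      · exact hg.comp measurable_snd
    exact (hsm.integral_prod_right).measurable
  have e : ∀ (g : ℝ → ℝ) (y : ℝ), (∫ t in (0:ℝ)..1,
        t ^ (ν' * y + α') * (1 - t) ^ (ν' - ν' * y + β') * g t)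
      = ∫ t in Set.Ioc (0:ℝ) 1, t ^ (ν' * y + α') * (1 - t) ^ (ν' - ν' * y + β') * g t :=
    fun g y => intervalIntegral.integral_of_le zero_le_one
  have hden : Measurable fun y => ∫ t in (0:ℝ)..1,
      t ^ (ν' * y + α') * (1 - t) ^ (ν' - ν' * y + β') := by
    have := key (fun _ => 1) measurable_const
    simp only [mul_one] at this
    have e' : ∀ y : ℝ, (∫ t in (0:ℝ)..1, t ^ (ν' * y + α') * (1 - t) ^ (ν' - ν' * y + β'))
        = ∫ t in Set.Ioc (0:ℝ) 1, t ^ (ν' * y + α') * (1 - t) ^ (ν' - ν' * y + β') :=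
      fun y => intervalIntegral.integral_of_le zero_le_one
    simpa [e'] using this
  have hnum : Measurable fun y => ∫ t in (0:ℝ)..1,
      t ^ (ν' * y + α') * (1 - t) ^ (ν' - ν' * y + β') * h t := by
    simpa [e h] using key h hm
  exact hnum.div hden

lemma measurable_BopE (hα : -1 < α) (ν' : ℝ) {h : ℝ → ℝ} (hm : Measurable h) :
    Measurable fun y => BopE ν' α (-1) h y := by
  have hne : α ≠ -1 := by intro h'; rw [h'] at hα; exact lt_irrefl _ hα
  have : (fun y => BopE ν' α (-1) h y)
      = fun y => if y = 1 then h 1 else Bop ν' α (-1) h y := by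
    funext y; simp [BopE, hne]
  rw [this]
  exact Measurable.ite (by simp [Set.setOf_eq_eq_singleton]) measurable_const
    (measurable_Bop ν' α (-1) hm)

lemma BopE_congr (hα : -1 < α) {f g : ℝ → ℝ}
    (hfg : ∀ t ∈ Set.Ioc (0:ℝ) 1, f t = g t) (ν' : ℝ) :
    BopE ν' α (-1) f = BopE ν' α (-1) g := by
  have hne : α ≠ -1 := by intro h'; rw [h'] at hα; exact lt_irrefl _ hα
  funext y
  have hBop : Bop ν' α (-1) f y = Bop ν' α (-1) g y := by
    simp only [Bop]
    congr 1
    apply intervalIntegral.integral_congr_ae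
    filter_upwards with t htI
    rw [Set.uIoc_of_le (zero_le_one' ℝ)] at htI
    rw [hfg t htI]
  have h1 : f 1 = g 1 := hfg 1 (by norm_num)
  simp [BopE, hne, hBop, h1]



lemma Bop_sandwich (hα : -1 < α) (hν : 1 ≤ ν) (hx : x ∈ Set.Ico (0:ℝ) 1)
    {h : ℝ → ℝ} (hm : Measurable h) {c₀ e A B : ℝ}
    (he : 0 ≤ e) (hA : 0 ≤ A) (hB : 0 ≤ B)
    (hbd : ∀ t ∈ Set.Ioc (0:ℝ) 1, |h t - c₀| ≤ e + A * (1 - t) ^ 2 + B * (1 - t)) :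
    |Bop ν α (-1) h x - c₀| ≤
      e + A * ((ν - ν * x) * (ν - ν * x + 1) / ((ν + α + 1) * (ν + α + 2)))
        + B * ((ν - ν * x) / (ν + α + 1)) := by
  have hp := hp_aux hα hν hx
  have hq := hq_aux hν hx
  have hDpos := D_pos hα hν hx
  have hw_int : IntegrableOn (fun t : ℝ => t ^ (ν*x+α) * (1-t) ^ (ν-ν*x+(-1))) (Set.Ioc 0 1) :=
    myBeta_integrableOn hp hq
  have hw_nonneg : ∀ t ∈ Set.Ioc (0:ℝ) 1, 0 ≤ t ^ (ν*x+α) * (1-t) ^ (ν-ν*x+(-1)) := by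
    intro t ht
    exact mul_nonneg (Real.rpow_nonneg ht.1.le _) (Real.rpow_nonneg (by linarith [ht.2]) _)
  have hw_meas : Measurable (fun t : ℝ => t ^ (ν*x+α) * (1-t) ^ (ν-ν*x+(-1))) :=
    (Measurable.pow measurable_id measurable_const).mul
      (Measurable.pow (measurable_const.sub measurable_id) measurable_const)
  have hw1_int : IntegrableOn (fun t : ℝ => t ^ (ν*x+α) * (1-t) ^ (ν-ν*x+(-1)) * (1-t))
      (Set.Ioc 0 1) := by simpa using weight_monomial_integrableOn hp hq 0 1
  have hw2_int : IntegrableOn (fun t : ℝ => t ^ (ν*x+α) * (1-t) ^ (ν-ν*x+(-1)) * (1-t)^2)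
      (Set.Ioc 0 1) := by simpa using weight_monomial_integrableOn hp hq 0 2
  have hg_int : IntegrableOn (fun t : ℝ =>
      t ^ (ν*x+α) * (1-t) ^ (ν-ν*x+(-1)) * (e + A*(1-t)^2 + B*(1-t))) (Set.Ioc 0 1) := by
    have e1 : (fun t : ℝ => t ^ (ν*x+α) * (1-t) ^ (ν-ν*x+(-1)) * (e + A*(1-t)^2 + B*(1-t)))
        = fun t => (e * (t ^ (ν*x+α) * (1-t) ^ (ν-ν*x+(-1)))
            + A * (t ^ (ν*x+α) * (1-t) ^ (ν-ν*x+(-1)) * (1-t)^2))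
            + B * (t ^ (ν*x+α) * (1-t) ^ (ν-ν*x+(-1)) * (1-t)) := by
      funext t; ring
    rw [e1]
    exact ((hw_int.const_mul e).add (hw2_int.const_mul A)).add (hw1_int.const_mul B)
  have hwh_int : IntegrableOn (fun t : ℝ =>
      t ^ (ν*x+α) * (1-t) ^ (ν-ν*x+(-1)) * (h t - c₀)) (Set.Ioc 0 1) := by
    apply Integrable.mono' hg_int
    · exact (hw_meas.mul (hm.sub measurable_const)).aestronglyMeasurable
    · rw [ae_restrict_iff' measurableSet_Ioc]
      filter_upwards with t ht
      rw [Real.norm_eq_abs, abs_mul, abs_of_nonneg (hw_nonneg t ht)]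
      exact mul_le_mul_of_nonneg_left (hbd t ht) (hw_nonneg t ht)
  have hwh'_int : IntegrableOn (fun t : ℝ =>
      t ^ (ν*x+α) * (1-t) ^ (ν-ν*x+(-1)) * h t) (Set.Ioc 0 1) := by
    have hgint2 : IntegrableOn (fun t : ℝ =>
        t ^ (ν*x+α) * (1-t) ^ (ν-ν*x+(-1)) * (e + A*(1-t)^2 + B*(1-t))
          + |c₀| * (t ^ (ν*x+α) * (1-t) ^ (ν-ν*x+(-1)))) (Set.Ioc 0 1) :=
      hg_int.add (hw_int.const_mul |c₀|)
    apply Integrable.mono' hgint2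
    · exact (hw_meas.mul hm).aestronglyMeasurable
    · rw [ae_restrict_iff' measurableSet_Ioc]
      filter_upwards with t ht
      rw [Real.norm_eq_abs, abs_mul, abs_of_nonneg (hw_nonneg t ht)]
      have h1 : |h t| ≤ |h t - c₀| + |c₀| := by
        calc |h t| = |(h t - c₀) + c₀| := by ring_nf
        _ ≤ |h t - c₀| + |c₀| := abs_add_le _ _
      have h2 : |h t| ≤ (e + A*(1-t)^2 + B*(1-t)) + |c₀| := le_trans h1 (by linarith [hbd t ht])
      calc t ^ (ν*x+α) * (1-t) ^ (ν-ν*x+(-1)) * |h t|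
          ≤ t ^ (ν*x+α) * (1-t) ^ (ν-ν*x+(-1)) * ((e + A*(1-t)^2 + B*(1-t)) + |c₀|) :=
            mul_le_mul_of_nonneg_left h2 (hw_nonneg t ht)
        _ = t ^ (ν*x+α) * (1-t) ^ (ν-ν*x+(-1)) * (e + A*(1-t)^2 + B*(1-t))
            + |c₀| * (t ^ (ν*x+α) * (1-t) ^ (ν-ν*x+(-1))) := by ring
  -- key equation
  have keyN : (∫ t in Set.Ioc (0:ℝ) 1, t ^ (ν*x+α) * (1-t) ^ (ν-ν*x+(-1)) * (h t - c₀))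
      = (∫ t in (0:ℝ)..1, t ^ (ν*x+α) * (1-t) ^ (ν-ν*x+(-1)) * h t)
        - c₀ * (∫ t in (0:ℝ)..1, t ^ (ν*x+α) * (1-t) ^ (ν-ν*x+(-1))) := by
    have e1 : (fun t : ℝ => t ^ (ν*x+α) * (1-t) ^ (ν-ν*x+(-1)) * (h t - c₀))
        = fun t => t ^ (ν*x+α) * (1-t) ^ (ν-ν*x+(-1)) * h t
            - c₀ * (t ^ (ν*x+α) * (1-t) ^ (ν-ν*x+(-1))) := by
      funext t; ring
    rw [e1, integral_sub hwh'_int (hw_int.const_mul c₀), MeasureTheory.integral_const_mul,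
      intervalIntegral.integral_of_le (zero_le_one' ℝ),
      intervalIntegral.integral_of_le (zero_le_one' ℝ)]
  have hBopEq : Bop ν α (-1) h x - c₀
      = (∫ t in Set.Ioc (0:ℝ) 1, t ^ (ν*x+α) * (1-t) ^ (ν-ν*x+(-1)) * (h t - c₀))
        / (∫ t in (0:ℝ)..1, t ^ (ν*x+α) * (1-t) ^ (ν-ν*x+(-1))) := by
    rw [keyN, sub_div, mul_div_assoc, div_self hDpos.ne', mul_one]
    simp only [Bop]
  -- main estimate
  rw [hBopEq, abs_div, abs_of_pos hDpos, div_le_iff₀ hDpos]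
  calc |∫ t in Set.Ioc (0:ℝ) 1, t ^ (ν*x+α) * (1-t) ^ (ν-ν*x+(-1)) * (h t - c₀)|
      ≤ ∫ t in Set.Ioc (0:ℝ) 1, |t ^ (ν*x+α) * (1-t) ^ (ν-ν*x+(-1)) * (h t - c₀)| := by
        simpa only [Real.norm_eq_abs] using norm_integral_le_integral_norm
          (μ := volume.restrict (Set.Ioc 0 1))
          (fun t : ℝ => t ^ (ν*x+α) * (1-t) ^ (ν-ν*x+(-1)) * (h t - c₀))
    _ ≤ ∫ t in Set.Ioc (0:ℝ) 1,
          t ^ (ν*x+α) * (1-t) ^ (ν-ν*x+(-1)) * (e + A*(1-t)^2 + B*(1-t)) := by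
        refine setIntegral_mono_on hwh_int.abs hg_int measurableSet_Ioc (fun t ht => ?_)
        rw [abs_mul, abs_of_nonneg (hw_nonneg t ht)]
        exact mul_le_mul_of_nonneg_left (hbd t ht) (hw_nonneg t ht)
    _ = (e + A * ((ν - ν * x) * (ν - ν * x + 1) / ((ν + α + 1) * (ν + α + 2)))
          + B * ((ν - ν * x) / (ν + α + 1)))
        * ∫ t in (0:ℝ)..1, t ^ (ν*x+α) * (1-t) ^ (ν-ν*x+(-1)) := by
        have e1 : (fun t : ℝ => t ^ (ν*x+α) * (1-t) ^ (ν-ν*x+(-1)) * (e + A*(1-t)^2 + B*(1-t)))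
            = fun t => (e * (t ^ (ν*x+α) * (1-t) ^ (ν-ν*x+(-1)))
                + A * (t ^ (ν*x+α) * (1-t) ^ (ν-ν*x+(-1)) * (1-t)^2))
                + B * (t ^ (ν*x+α) * (1-t) ^ (ν-ν*x+(-1)) * (1-t)) := by
          funext t; ring
        have i1 : IntegrableOn (fun t : ℝ =>
            e * (t ^ (ν*x+α) * (1-t) ^ (ν-ν*x+(-1)))
              + A * (t ^ (ν*x+α) * (1-t) ^ (ν-ν*x+(-1)) * (1-t)^2)) (Set.Ioc 0 1) :=
          (hw_int.const_mul e).add (hw2_int.const_mul A)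
        rw [e1, integral_add i1 (hw1_int.const_mul B),
          integral_add (hw_int.const_mul e) (hw2_int.const_mul A),
          MeasureTheory.integral_const_mul, MeasureTheory.integral_const_mul, MeasureTheory.integral_const_mul,
          ← intervalIntegral.integral_of_le (zero_le_one' ℝ),
          ← intervalIntegral.integral_of_le (zero_le_one' ℝ),
          ← intervalIntegral.integral_of_le (zero_le_one' ℝ),
          L_m1 hα hν hx, L_m2 hα hν hx]
        ring


end auxlemmas

set_option maxHeartbeats 2000000 in
theorem iterates_alpha_minus_one (α : ℝ) (hα : α > -1) (n : ℕ) (hn : 1 ≤ n) :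
    (∀ x ∈ Set.Ico (0:ℝ) 1,
      BopE n α (-1) (fun t => t ^ 2) x =
          (n * x + α + 1) * (n * x + α + 2) / ((n + α + 1) * (n + α + 2)) ∧
        x ^ 2 < BopE n α (-1) (fun t => t ^ 2) x) ∧
    ∀ f : ℝ → ℝ, ContinuousOn f (Set.Icc (0:ℝ) 1) →
      TendstoUniformlyOn (fun (m : ℕ) (x : ℝ) => (BopE n α (-1))^[m] f x)
        (fun _ => f 1) atTop (Set.Icc (0:ℝ) 1) := by
  have hα' : -1 < α := hα
  have hν : (1:ℝ) ≤ (n:ℝ) := by exact_mod_cast hn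
  have hden1 : (0:ℝ) < (n:ℝ) + α + 1 := by linarith
  have hden2 : (0:ℝ) < (n:ℝ) + α + 2 := by linarith
  constructor
  · intro x hx
    have h1 : BopE (n:ℝ) α (-1) (fun t => t ^ 2) x = Bop (n:ℝ) α (-1) (fun t => t ^ 2) x :=
      BopE_eq_Bop hα' (ne_of_lt hx.2) _
    have h2 := Bop_e2_val hα' hν hx
    refine ⟨by rw [h1, h2], ?_⟩
    rw [h1, h2, lt_div_iff₀ (mul_pos hden1 hden2)]
    have key : 0 < (1 - x) * ((α+1)*(α+2) + x*((n:ℝ)*(2*α+3)+(α+1)*(α+2))) := by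
      apply mul_pos (by linarith [hx.2])
      have hfac : (0:ℝ) < (n:ℝ)*(2*α+3) := mul_pos (by linarith) (by linarith)
      have : (0:ℝ) ≤ x*((n:ℝ)*(2*α+3)+(α+1)*(α+2)) :=
        mul_nonneg hx.1 (by nlinarith)
      nlinarith
    nlinarith [key]
  · intro f hf
    -- extend f to a globally continuous function
    obtain ⟨f', hf'def⟩ : ∃ f' : ℝ → ℝ, f' = fun t => f (max 0 (min 1 t)) := ⟨_, rfl⟩
    have hf'cont : Continuous f' := by
      rw [hf'def]
      apply hf.comp_continuous (continuous_const.max (continuous_const.min continuous_id))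
      intro t
      exact ⟨le_max_left _ _, max_le zero_le_one (min_le_left _ _)⟩
    have hf'meas : Measurable f' := hf'cont.measurable
    have hf'eq : ∀ t ∈ Set.Icc (0:ℝ) 1, f' t = f t := by
      intro t ht
      rw [hf'def]
      simp only []
      rw [min_eq_right ht.2, max_eq_right ht.1]
    have hBf' : BopE (n:ℝ) α (-1) f = BopE (n:ℝ) α (-1) f' :=
      BopE_congr hα' (fun t ht => (hf'eq t ⟨ht.1.le, ht.2⟩).symm) (n:ℝ)
    -- uniform-continuity quadratic bound
    have ucbound : ∀ ε > (0:ℝ), ∃ K : ℝ, 0 ≤ K ∧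
        ∀ t ∈ Set.Icc (0:ℝ) 1, |f t - f 1| ≤ ε + K * (1-t)^2 := by
      intro ε hε
      obtain ⟨M, hM⟩ := isCompact_Icc.exists_bound_of_continuousOn hf
      have h1mem : (1:ℝ) ∈ Set.Icc (0:ℝ) 1 := ⟨zero_le_one, le_refl 1⟩
      have hM0 : 0 ≤ M := le_trans (norm_nonneg _) (hM 1 h1mem)
      have hUC := isCompact_Icc.uniformContinuousOn_of_continuous hf
      rw [Metric.uniformContinuousOn_iff] at hUC
      obtain ⟨δ, hδ, hδ'⟩ := hUC ε hε
      refine ⟨2*M/δ^2, by positivity, fun t ht => ?_⟩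
      have hKnn : (0:ℝ) ≤ 2*M/δ^2 := by positivity
      by_cases hc : dist t 1 < δ
      · have hlt := hδ' t ht 1 h1mem hc
        rw [Real.dist_eq] at hlt
        nlinarith [sq_nonneg (1-t), mul_nonneg hKnn (sq_nonneg (1-t))]
      · push_neg at hc
        rw [Real.dist_eq] at hc
        have habs : |t - 1| = 1 - t := by
          rw [abs_sub_comm, abs_of_nonneg (by linarith [ht.2])]
        rw [habs] at hc
        have hft : |f t| ≤ M := by
          have := hM t ht; rwa [Real.norm_eq_abs] at this
        have hf1 : |f 1| ≤ M := by
          have := hM 1 h1mem; rwa [Real.norm_eq_abs] at this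
        have h2M : |f t - f 1| ≤ 2*M := by
          rw [abs_le] at hft hf1 ⊢
          constructor <;> linarith [hft.1, hft.2, hf1.1, hf1.2]
        have hδ2 : δ^2 ≤ (1-t)^2 := by nlinarith
        have hcanc : (2*M/δ^2) * δ^2 = 2*M := by field_simp
        nlinarith [mul_nonneg hKnn (sub_nonneg.2 hδ2)]
    -- contraction constants
    obtain ⟨ρ, hρ⟩ : ∃ ρ:ℝ, ρ = (n:ℝ)^2 / (((n:ℝ)+α+1)*((n:ℝ)+α+2)) := ⟨_, rfl⟩
    obtain ⟨γ, hγ⟩ : ∃ γ:ℝ, γ = (n:ℝ) / (((n:ℝ)+α+1)*((n:ℝ)+α+2)) := ⟨_, rfl⟩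
    obtain ⟨c, hc⟩ : ∃ c:ℝ, c = (n:ℝ) / ((n:ℝ)+α+1) := ⟨_, rfl⟩
    obtain ⟨r, hr⟩ : ∃ r:ℝ, r = max (ρ + γ) c := ⟨_, rfl⟩
    have hdd : (0:ℝ) < ((n:ℝ)+α+1)*((n:ℝ)+α+2) := mul_pos hden1 hden2
    have hρ0 : 0 ≤ ρ := by rw [hρ]; positivity
    have hγ0 : 0 ≤ γ := by rw [hγ]; positivity
    have hc0 : 0 ≤ c := by rw [hc]; positivity
    have hr0 : 0 ≤ r := by rw [hr]; exact le_trans (by linarith) (le_max_left _ _)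
    have hργ_lt : ρ + γ < 1 := by
      rw [hρ, hγ, ← add_div, div_lt_one hdd]
      nlinarith
    have hc_lt : c < 1 := by
      rw [hc, div_lt_one hden1]
      linarith
    have hr1 : r < 1 := by rw [hr]; exact max_lt hργ_lt hc_lt
    have hne1 : ((n:ℝ)+α+1) ≠ 0 := hden1.ne'
    have hne2 : ((n:ℝ)+α+2) ≠ 0 := hden2.ne'
    have rearr : ∀ (A B y : ℝ),
        A * (((n:ℝ) - (n:ℝ)*y)*((n:ℝ) - (n:ℝ)*y+1)/(((n:ℝ)+α+1)*((n:ℝ)+α+2)))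
          + B * (((n:ℝ) - (n:ℝ)*y)/((n:ℝ)+α+1))
        = (ρ*A)*(1-y)^2 + (γ*A + c*B)*(1-y) := by
      intro A B y
      rw [hρ, hγ, hc]
      field_simp
      ring
    rw [Metric.tendstoUniformlyOn_iff]
    intro ε' hε'
    obtain ⟨K, hK, hbase⟩ := ucbound (ε'/2) (by linarith)
    -- main induction
    have main : ∀ m : ℕ, Measurable ((BopE (n:ℝ) α (-1))^[m] f') ∧
        ∃ A B : ℝ, 0 ≤ A ∧ 0 ≤ B ∧ A + B ≤ K * r ^ m ∧
          ∀ y ∈ Set.Icc (0:ℝ) 1,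
            |(BopE (n:ℝ) α (-1))^[m] f' y - f 1| ≤ ε'/2 + A*(1-y)^2 + B*(1-y) := by
      intro m
      induction m with
      | zero =>
        refine ⟨by simpa using hf'meas, K, 0, hK, le_refl 0, by simp, fun y hy => ?_⟩
        simp only [Function.iterate_zero, id_eq]
        rw [hf'eq y hy]
        have := hbase y hy
        linarith
      | succ m ih =>
        obtain ⟨hmeas, A, B, hA, hB, hsum, hbd⟩ := ih
        have hit : (BopE (n:ℝ) α (-1))^[m+1] f'
            = BopE (n:ℝ) α (-1) ((BopE (n:ℝ) α (-1))^[m] f') :=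
          Function.iterate_succ_apply' _ _ _
        refine ⟨?_, ρ*A, γ*A + c*B, mul_nonneg hρ0 hA,
          add_nonneg (mul_nonneg hγ0 hA) (mul_nonneg hc0 hB), ?_, ?_⟩
        · rw [hit]; exact measurable_BopE hα' (n:ℝ) hmeas
        · have hργ_le : ρ + γ ≤ r := by rw [hr]; exact le_max_left _ _
          have hc_le : c ≤ r := by rw [hr]; exact le_max_right _ _
          rw [pow_succ]
          nlinarith [mul_le_mul_of_nonneg_right hργ_le hA,
            mul_le_mul_of_nonneg_right hc_le hB,
            mul_le_mul_of_nonneg_left hsum hr0]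
        · intro y hy
          rw [hit]
          by_cases hy1 : y = (1:ℝ)
          · subst hy1
            have hval : BopE (n:ℝ) α (-1) ((BopE (n:ℝ) α (-1))^[m] f') 1
                = (BopE (n:ℝ) α (-1))^[m] f' 1 := by
              simp [BopE]
            rw [hval]
            have := hbd 1 ⟨zero_le_one, le_refl 1⟩
            simp only [sub_self] at this ⊢
            nlinarith [mul_nonneg hρ0 hA, mul_nonneg hγ0 hA, mul_nonneg hc0 hB]
          · have hyI : y ∈ Set.Ico (0:ℝ) 1 := ⟨hy.1, lt_of_le_of_ne hy.2 hy1⟩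
            rw [BopE_eq_Bop hα' hy1]
            have hsand := Bop_sandwich hα' hν hyI hmeas (by linarith) hA hB
              (fun t ht => hbd t ⟨ht.1.le, ht.2⟩)
            have hre := rearr A B y
            linarith
    have htend : Tendsto (fun m : ℕ => K * r ^ m) atTop (nhds 0) := by
      have := (tendsto_pow_atTop_nhds_zero_of_lt_one hr0 hr1).const_mul K
      simpa using this
    have hev : ∀ᶠ m in atTop, K * r ^ m < ε'/2 :=
      htend.eventually_lt_const (by linarith)
    filter_upwards [hev, eventually_ge_atTop 1] with m hm hm1
    intro y hy
    obtain ⟨hmeas, A, B, hA, hB, hsum, hbd⟩ := main m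
    have heq : (BopE (n:ℝ) α (-1))^[m] f y = (BopE (n:ℝ) α (-1))^[m] f' y := by
      obtain ⟨k, rfl⟩ : ∃ k, m = k + 1 := ⟨m - 1, by omega⟩
      rw [Function.iterate_succ_apply, Function.iterate_succ_apply, hBf']
    rw [Real.dist_eq, heq, abs_sub_comm]
    have h1y : (1-y)^2 ≤ 1 := by nlinarith [hy.1, hy.2]
    have h2y : (1-y) ≤ 1 := by linarith [hy.1]
    have h3y : (0:ℝ) ≤ 1 - y := by linarith [hy.2]
    have := hbd y hy
    have hAB : A*(1-y)^2 + B*(1-y) ≤ A + B := by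
      nlinarith [mul_le_mul_of_nonneg_left h1y hA, mul_le_mul_of_nonneg_left h2y hB]
    calc |(BopE (n:ℝ) α (-1))^[m] f' y - f 1| ≤ ε'/2 + A*(1-y)^2 + B*(1-y) := hbd y hy
      _ ≤ ε'/2 + (A + B) := by linarith
      _ ≤ ε'/2 + K * r ^ m := by linarith
      _ < ε' := by linarith
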